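/- Let V be a finite-dimensional real inner product space and Ω ⊆ V a nonempty open convex cone such that ⟨v, w⟩ > 0 for all v, w ∈ Ω. Let K ⊆ Ω be a nonempty kernel of Ω, i.e. K + Ω ⊆ K and 0 is not in the closure of K. Then the semi-dual K^∨ = {h ∈ V : ⟨h, a⟩ ≥ 1 for all a ∈ K} again satisfies the kernel conditions: 0 is not in the closure of K^∨, and K^∨ + Ω ⊆ K^∨. -/
import Mathlib


open scoped Pointwise RealInnerProductSpace

/-- The semi-dual `K^∨ = {h : ⟨h, a⟩ ≥ 1 for all a ∈ K}` of a kernel `K` of an open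
convex cone `Ω` (on which the inner product is positive) is again a kernel:
`0 ∉ closure(K^∨)` and `K^∨ + Ω ⊆ K^∨`. -/
theorem stmt15 (V : Type*) [NormedAddCommGroup V] [InnerProductSpace ℝ V]
    [FiniteDimensional ℝ V]
    (Ω : Set V) (hopen : IsOpen Ω) (hconv : Convex ℝ Ω) (hne : Ω.Nonempty)
    (hcone : ∀ c : ℝ, 0 < c → c • Ω = Ω)
    (hpos : ∀ v ∈ Ω, ∀ w ∈ Ω, 0 < ⟪v, w⟫)
    (K : Set V) (hKΩ : K ⊆ Ω) (hKne : K.Nonempty)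
    (hker : K + Ω ⊆ K) (hK0 : 0 ∉ closure K)
    (Kdual : Set V) (hKdual : Kdual = {h : V | ∀ a ∈ K, 1 ≤ ⟪h, a⟫}) :
    0 ∉ closure Kdual ∧ Kdual + Ω ⊆ Kdual := by
  obtain ⟨a, haK⟩ := hKne
  constructor
  · intro h0
    have hcl : closure Kdual ⊆ {h : V | 1 ≤ ⟪h, a⟫} := by
      apply closure_minimal
      · intro h hh
        rw [hKdual] at hh
        exact hh a haK
      · have : IsClosed {h : V | ⟪h, a⟫ ∈ Set.Ici (1:ℝ)} :=
          IsClosed.preimage (Continuous.inner continuous_id continuous_const) isClosed_Ici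
        simpa using this
    have := hcl h0
    simp at this
    linarith
  · rintro x ⟨h, hh, w, hw, rfl⟩
    rw [hKdual] at hh ⊢
    intro b hbK
    have h1 : 1 ≤ ⟪h, b⟫ := hh b hbK
    have h2 : 0 < ⟪w, b⟫ := hpos w hw b (hKΩ hbK)
    rw [inner_add_left]
    linarith
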